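/- arXiv:2208.02203 — 3 statements merged into one kernel-verified Lean document; each statement's English description precedes it below -/
import Mathlib

section
/- Let u_α(x) = (α^{3/2}/√(8π)) e^{-α|x|/2} be the ground state of the hydrogen atom Hamiltonian h_α = -Δ - α/|x| with ground state energy e_α = -α²/4. Then ⟨x u_α, (h_α - e_α)(x u_α)⟩ = 3, where x u_α denotes the vector-valued function x ↦ x·u_α(x) and the inner product sums over the three components. -/
open Real MeasureTheory

noncomputable def groundState (α : ℝ) (x : EuclideanSpace ℝ (Fin 3)) : ℝ :=
  (α ^ ((3 : ℝ) / 2) / Real.sqrt (8 * π)) * Real.exp (-α * ‖x‖ / 2)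

noncomputable def laplacian (f : EuclideanSpace ℝ (Fin 3) → ℝ)
    (x : EuclideanSpace ℝ (Fin 3)) : ℝ :=
  ∑ i : Fin 3, iteratedDeriv 2 (fun t : ℝ => f (x + t • EuclideanSpace.single i (1 : ℝ))) 0

/-- The hydrogen Hamiltonian `h_α = -Δ - α/|x|` applied to a function, pointwise. -/
noncomputable def hydrogenOp (α : ℝ) (f : EuclideanSpace ℝ (Fin 3) → ℝ)
    (x : EuclideanSpace ℝ (Fin 3)) : ℝ :=
  -laplacian f x - (α / ‖x‖) * f x

lemma key1 (a c α C b δ t : ℝ) (h : 0 < t^2 + 2*a*t + c) :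
    HasDerivAt (fun s => (b + δ*s) * (C * Real.exp (-α * Real.sqrt (s^2 + 2*a*s + c) / 2)))
      ((δ - α/2 * ((b + δ*t) * ((a+t) / Real.sqrt (t^2+2*a*t+c)))) *
        (C * Real.exp (-α * Real.sqrt (t^2+2*a*t+c)/2))) t := by
  have hq : HasDerivAt (fun s : ℝ => s^2 + 2*a*s + c) (2*t + 2*a) t := by
    have h1 : HasDerivAt (fun s : ℝ => s^2) (2*t) t := by
      simpa using hasDerivAt_pow 2 t
    have h2 : HasDerivAt (fun s : ℝ => 2*a*s) (2*a) t := by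
      simpa using (hasDerivAt_id t).const_mul (2*a)
    simpa using (h1.add h2).add_const c
  have hs := hq.sqrt h.ne'
  have hE : HasDerivAt (fun s => Real.exp (-α * Real.sqrt (s^2 + 2*a*s + c) / 2))
      (Real.exp (-α * Real.sqrt (t^2+2*a*t+c)/2) * (-α * ((2*t+2*a) / (2 * Real.sqrt (t^2+2*a*t+c))) / 2)) t := by
    exact ((hs.const_mul (-α)).div_const 2).exp
  have hlin : HasDerivAt (fun s : ℝ => b + δ*s) δ t := by
    simpa using ((hasDerivAt_id t).const_mul δ).const_add b
  have := hlin.fun_mul (hE.const_mul C)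
  refine this.congr_deriv ?_
  have hr0 : Real.sqrt (t^2+2*a*t+c) ≠ 0 := by positivity
  field_simp
  ring

lemma key2 (a c α C b δ : ℝ) (hc : 0 < c) :
    HasDerivAt (fun s => (δ - α/2 * ((b + δ*s) * ((a+s) / Real.sqrt (s^2+2*a*s+c)))) *
        (C * Real.exp (-α * Real.sqrt (s^2+2*a*s+c)/2)))
      ((C * Real.exp (-α * Real.sqrt c / 2)) *
        ( -(α/2) * ((δ*a + b)/Real.sqrt c - b*a^2/(Real.sqrt c * (Real.sqrt c * Real.sqrt c)))
          - (δ - α/2 * (b*a/Real.sqrt c)) * (α/2) * (a/Real.sqrt c) )) 0 := by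
  have hq : HasDerivAt (fun s : ℝ => s^2 + 2*a*s + c) (2*0 + 2*a) 0 := by
    have h1 : HasDerivAt (fun s : ℝ => s^2) (2*0) 0 := by
      simpa using hasDerivAt_pow 2 (0:ℝ)
    have h2 : HasDerivAt (fun s : ℝ => 2*a*s) (2*a) 0 := by
      simpa using (hasDerivAt_id (0:ℝ)).const_mul (2*a)
    simpa using (h1.add h2).add_const c
  have hc' : (0:ℝ)^2 + 2*a*0 + c = c := by ring
  have hcne : (fun s : ℝ => s^2 + 2*a*s + c) 0 ≠ 0 := by simpa using hc.ne'
  have hs := hq.sqrt hcne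
  have hr0 : Real.sqrt c ≠ 0 := by positivity
  have ha' : HasDerivAt (fun s : ℝ => a + s) 1 0 := by
    simpa using (hasDerivAt_id (0:ℝ)).const_add a
  have hdiv := ha'.fun_div hs (by simpa using hr0)
  have hlin : HasDerivAt (fun s : ℝ => b + δ*s) δ 0 := by
    simpa using ((hasDerivAt_id (0:ℝ)).const_mul δ).const_add b
  have hP := hlin.fun_mul hdiv
  have hF1 := (hP.const_mul (α/2)).const_sub δ
  have hE := ((hs.const_mul (-α)).div_const 2).exp
  have := hF1.fun_mul (hE.const_mul C)
  simp only [hc'] at this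
  refine this.congr_deriv ?_
  have hr2 : Real.sqrt c ^ 2 = c := Real.sq_sqrt hc.le
  generalize hR : Real.sqrt c = r at hr2 hr0 ⊢
  field_simp
  ring

lemma key3 (a c α C b δ : ℝ) (hc : 0 < c) :
    iteratedDeriv 2 (fun s => (b + δ*s) * (C * Real.exp (-α * Real.sqrt (s^2+2*a*s+c) / 2))) 0
      = (C * Real.exp (-α * Real.sqrt c / 2)) *
        ( -(α/2) * ((δ*a + b)/Real.sqrt c - b*a^2/(Real.sqrt c * (Real.sqrt c * Real.sqrt c)))
          - (δ - α/2 * (b*a/Real.sqrt c)) * (α/2) * (a/Real.sqrt c) ) := by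
  rw [iteratedDeriv_succ, iteratedDeriv_one]
  have hev : ∀ᶠ s in nhds (0:ℝ), 0 < s^2 + 2*a*s + c := by
    have hcont : Continuous (fun s : ℝ => s^2 + 2*a*s + c) := by continuity
    have : {s : ℝ | 0 < s^2 + 2*a*s + c} ∈ nhds (0:ℝ) :=
      (isOpen_lt continuous_const hcont).mem_nhds (by simpa using hc)
    exact this
  have heq : (deriv (fun s => (b + δ*s) * (C * Real.exp (-α * Real.sqrt (s^2+2*a*s+c) / 2))))
      =ᶠ[nhds (0:ℝ)] (fun s => (δ - α/2 * ((b + δ*s) * ((a+s) / Real.sqrt (s^2+2*a*s+c)))) *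
        (C * Real.exp (-α * Real.sqrt (s^2+2*a*s+c)/2))) := by
    filter_upwards [hev] with s hs
    exact (key1 a c α C b δ s hs).deriv
  rw [heq.deriv_eq]
  exact (key2 a c α C b δ hc).deriv

set_option maxHeartbeats 1000000 in
lemma lap_eq (α : ℝ) (x : EuclideanSpace ℝ (Fin 3)) (hx : x ≠ 0) (j : Fin 3) :
    laplacian (fun z => z j * groundState α z) x
      = (α^2/4 - 2*α/‖x‖) * (x j * groundState α x) := by
  have hxn : (0:ℝ) < ‖x‖ := norm_pos_iff.2 hx
  have hc : (0:ℝ) < ‖x‖^2 := by positivity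
  have hfn : ∀ i : Fin 3, (fun t : ℝ => (fun z : EuclideanSpace ℝ (Fin 3) => z j * groundState α z)
        (x + t • EuclideanSpace.single i (1:ℝ)))
      = fun s => (x j + (if i = j then (1:ℝ) else 0)*s) *
          ((α ^ ((3:ℝ)/2) / Real.sqrt (8*π)) * Real.exp (-α * Real.sqrt (s^2 + 2*(x i)*s + ‖x‖^2)/2)) := by
    intro i
    funext t
    have h1 : (x + t • EuclideanSpace.single i (1:ℝ)) j = x j + t * (if i = j then 1 else 0) := by
      simp [EuclideanSpace.single_apply, eq_comm]
    have h2 : ‖x + t • EuclideanSpace.single i (1:ℝ)‖ = Real.sqrt (t^2 + 2*(x i)*t + ‖x‖^2) := by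
      rw [show ‖x + t • EuclideanSpace.single i (1:ℝ)‖
          = Real.sqrt (‖x + t • EuclideanSpace.single i (1:ℝ)‖^2) from (Real.sqrt_sq (norm_nonneg _)).symm]
      congr 1
      rw [norm_add_sq_real, inner_smul_right, norm_smul]
      simp [EuclideanSpace.inner_single_right, mul_pow]
      ring
    simp only [groundState, h1, h2]
    ring
  unfold laplacian
  have hrw : ∀ i : Fin 3, iteratedDeriv 2 (fun t : ℝ =>
        (fun z : EuclideanSpace ℝ (Fin 3) => z j * groundState α z) (x + t • EuclideanSpace.single i (1:ℝ))) 0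
      = ((α ^ ((3:ℝ)/2) / Real.sqrt (8*π)) * Real.exp (-α * Real.sqrt (‖x‖^2) / 2)) *
        ( -(α/2) * (((if i = j then (1:ℝ) else 0)*(x i) + x j)/Real.sqrt (‖x‖^2)
              - (x j)*(x i)^2/(Real.sqrt (‖x‖^2) * (Real.sqrt (‖x‖^2) * Real.sqrt (‖x‖^2))))
          - ((if i = j then (1:ℝ) else 0) - α/2 * ((x j)*(x i)/Real.sqrt (‖x‖^2))) * (α/2) * ((x i)/Real.sqrt (‖x‖^2)) ) := by
    intro i
    rw [hfn i]
    exact key3 (x i) (‖x‖^2) α _ (x j) _ hc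
  simp only [hrw]
  have hsq : Real.sqrt (‖x‖^2) = ‖x‖ := Real.sqrt_sq (norm_nonneg x)
  rw [Fin.sum_univ_three]
  simp only [hsq, groundState]
  have hx2 : x 0^2 + x 1^2 + x 2^2 = ‖x‖^2 := by
    rw [EuclideanSpace.norm_eq, Real.sq_sqrt (by positivity)]
    simp [Fin.sum_univ_three]
  have h0 : x 0^2 = ‖x‖^2 - x 1^2 - x 2^2 := by linarith
  have hj : j = 0 ∨ j = 1 ∨ j = 2 := by
    fin_cases j
    exacts [Or.inl rfl, Or.inr (Or.inl rfl), Or.inr (Or.inr rfl)]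
  rcases hj with rfl | rfl | rfl
  · norm_num [Fin.ext_iff]
    field_simp
    linear_combination (α ^ ((3:ℝ)/2) * α * x 0 * 4 * (2 + α * ‖x‖)) * hx2
  · norm_num [Fin.ext_iff]
    field_simp
    linear_combination (α ^ ((3:ℝ)/2) * α * x 1 * 4 * (2 + α * ‖x‖)) * hx2
  · norm_num [Fin.ext_iff]
    field_simp
    linear_combination (α ^ ((3:ℝ)/2) * α * x 2 * 4 * (2 + α * ‖x‖)) * hx2

lemma radial_bound (α : ℝ) (hα : 0 < α) (t : ℝ) (ht : 0 ≤ t) :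
    t * Real.exp (-α*t) ≤ (512 * (1 + 362880 / α^9)) * (1+t)^(-(4:ℝ)) := by
  set M : ℝ := 512 * (1 + 362880 / α^9) with hM
  have h1t : (0:ℝ) < 1 + t := by linarith
  have hrpow : (1+t) ^ (-(4:ℝ)) = ((1+t)^(4:ℕ))⁻¹ := by
    rw [← Real.rpow_natCast (1+t) 4, ← Real.rpow_neg h1t.le]
    norm_num
  rw [hrpow, ← div_eq_mul_inv, le_div_iff₀ (by positivity)]
  have hexp1 : (1:ℝ) ≤ Real.exp (α*t) := Real.one_le_exp (by positivity)
  have hfact : ((Nat.factorial 9 : ℕ) : ℝ) = 362880 := by norm_num [Nat.factorial]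
  have hpdf := Real.pow_div_factorial_le_exp (x := α*t) (by positivity) 9
  rw [hfact] at hpdf
  have h2 : t^9 * α^9 ≤ 362880 * Real.exp (α*t) := by
    have h3 : (α*t)^9 ≤ 362880 * Real.exp (α*t) := by
      rw [div_le_iff₀ (by norm_num)] at hpdf; linarith
    nlinarith [h3]
  have ht9 : t^9 ≤ 362880 / α^9 * Real.exp (α*t) := by
    rw [div_mul_eq_mul_div, le_div_iff₀ (by positivity)]
    linarith
  have h9 : (1+t)^(9:ℕ) ≤ 512 * (1 + t^9) := by
    have hmax : 1 + t ≤ 2 * max 1 t := by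
      rcases le_total 1 t with h | h
      · rw [max_eq_right h]; linarith
      · rw [max_eq_left h]; linarith
    have hmx : (max 1 t)^(9:ℕ) ≤ 1 + t^9 := by
      rcases le_total 1 t with h | h
      · rw [max_eq_right h]; nlinarith [pow_nonneg (le_trans zero_le_one h) 9]
      · rw [max_eq_left h]; have : (0:ℝ) ≤ t^9 := by positivity
        norm_num; linarith
    calc (1+t)^(9:ℕ) ≤ (2 * max 1 t)^(9:ℕ) := pow_le_pow_left₀ (by linarith) hmax 9
      _ = 512 * (max 1 t)^(9:ℕ) := by ring
      _ ≤ 512 * (1 + t^9) := by linarith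
  have key : t * (1+t)^(4:ℕ) ≤ M * Real.exp (α*t) := by
    calc t * (1+t)^(4:ℕ) ≤ (1+t)^(5:ℕ) := by nlinarith [pow_nonneg h1t.le 4]
      _ ≤ (1+t)^(9:ℕ) := pow_le_pow_right₀ (by linarith) (by norm_num)
      _ ≤ 512 * (1 + t^9) := h9
      _ ≤ 512 * (Real.exp (α*t) + 362880 / α^9 * Real.exp (α*t)) := by nlinarith
      _ = M * Real.exp (α*t) := by rw [hM]; ring
  have hexp : Real.exp (-α*t) = (Real.exp (α*t))⁻¹ := by
    rw [← Real.exp_neg]; ring_nf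
  have epos : (0:ℝ) < Real.exp (α*t) := Real.exp_pos _
  calc t * Real.exp (-α*t) * (1+t)^4
      = (t * (1+t)^(4:ℕ)) * (Real.exp (α*t))⁻¹ := by rw [hexp]; ring
    _ ≤ (M * Real.exp (α*t)) * (Real.exp (α*t))⁻¹ := by
        apply mul_le_mul_of_nonneg_right key (by positivity)
    _ = M := by field_simp

lemma F_integrable (α : ℝ) (hα : 0 < α) :
    Integrable (fun x : EuclideanSpace ℝ (Fin 3) => α * ‖x‖ * (groundState α x)^2) := by
  set K : ℝ := α ^ ((3 : ℝ) / 2) / Real.sqrt (8 * π) with hK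
  have hint : Integrable (fun x : EuclideanSpace ℝ (Fin 3) =>
      (α * K^2 * (512 * (1 + 362880 / α^9))) * (1+‖x‖)^(-(4:ℝ))) := by
    refine Integrable.const_mul ?_ _
    refine integrable_one_add_norm ?_
    rw [finrank_euclideanSpace]
    norm_num
  refine hint.mono' ?_ ?_
  · apply Measurable.aestronglyMeasurable
    unfold groundState
    fun_prop
  · filter_upwards with x
    have hx0 : (0:ℝ) ≤ ‖x‖ := norm_nonneg x
    have hgs : (groundState α x)^2 = K^2 * Real.exp (-α*‖x‖) := by
      unfold groundState
      rw [hK]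
      rw [mul_pow, sq (Real.exp _), ← Real.exp_add]
      ring_nf
    rw [Real.norm_of_nonneg (by rw [hgs]; positivity), hgs]
    have hb := radial_bound α hα ‖x‖ hx0
    calc α * ‖x‖ * (K^2 * Real.exp (-α*‖x‖))
        = (α * K^2) * (‖x‖ * Real.exp (-α*‖x‖)) := by ring
      _ ≤ (α * K^2) * ((512 * (1 + 362880 / α^9)) * (1+‖x‖)^(-(4:ℝ))) := by
          apply mul_le_mul_of_nonneg_left hb (by positivity)
      _ = (α * K^2 * (512 * (1 + 362880 / α^9))) * (1+‖x‖)^(-(4:ℝ)) := by ring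

lemma F_integral (α : ℝ) (hα : 0 < α) :
    ∫ x : EuclideanSpace ℝ (Fin 3), α * ‖x‖ * (groundState α x)^2 = 3 := by
  set K : ℝ := α ^ ((3 : ℝ) / 2) / Real.sqrt (8 * π) with hK
  have hK2 : K^2 = α^3 / (8*π) := by
    rw [hK, div_pow, ← Real.rpow_natCast (α ^ ((3:ℝ)/2)) 2, ← Real.rpow_mul hα.le,
      Real.sq_sqrt (by positivity)]
    norm_num
  have hfun : (fun x : EuclideanSpace ℝ (Fin 3) => α * ‖x‖ * (groundState α x)^2)
      = fun x => (fun y : ℝ => α * K^2 * (y * Real.exp (-(α * y)))) ‖x‖ := by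
    funext x
    simp only [groundState, ← hK]
    rw [mul_pow, sq (Real.exp _), ← Real.exp_add]
    ring_nf
  rw [hfun, MeasureTheory.integral_fun_norm_addHaar volume
    (fun y : ℝ => α * K^2 * (y * Real.exp (-(α * y))))]
  have hdim : Module.finrank ℝ (EuclideanSpace ℝ (Fin 3)) = 3 := by
    simp [finrank_euclideanSpace]
  rw [hdim]
  have hball : (volume (Metric.ball (0 : EuclideanSpace ℝ (Fin 3)) 1)).toReal = 4/3 * π := by
    rw [EuclideanSpace.volume_ball]
    have hcard : Fintype.card (Fin 3) = 3 := by simp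
    rw [hcard]
    have hGamma : Real.Gamma ((3:ℝ)/2 + 1) = 3/4 * Real.sqrt π := by
      rw [Real.Gamma_add_one (by norm_num)]
      have : (3:ℝ)/2 = 1/2 + 1 := by norm_num
      rw [this, Real.Gamma_add_one (by norm_num), Real.Gamma_one_half_eq]
      ring
    have h3 : (3:ℝ)/2 + 1 = (3:ℕ)/2 + 1 := by norm_num
    rw [← h3, hGamma]
    have hsπ : Real.sqrt π ≠ 0 := by positivity
    have hval : Real.sqrt π ^ 3 / (3/4 * Real.sqrt π) = 4/3 * π := by
      rw [show Real.sqrt π ^ 3 = π * Real.sqrt π by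
        rw [show (3:ℕ) = 2+1 from rfl, pow_succ, Real.sq_sqrt Real.pi_nonneg]]
      field_simp
    rw [hval]
    simp [ENNReal.toReal_ofReal (by positivity : (0:ℝ) ≤ 4/3*π)]
  rw [measureReal_def, hball]
  have hrad : ∫ y in Set.Ioi (0:ℝ), y ^ (3-1) • (α * K^2 * (y * Real.exp (-(α * y))))
      = α * K^2 * ((1/α)^(4:ℝ) * Real.Gamma 4) := by
    have h1 : ∀ y ∈ Set.Ioi (0:ℝ), y ^ (3-1) • (α * K^2 * (y * Real.exp (-(α * y))))
        = (α * K^2) * (y ^ ((4:ℝ)-1) * Real.exp (-(α * y))) := by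
      intro y hy
      have hy0 : 0 < y := hy
      rw [show ((4:ℝ)-1) = ((3:ℕ):ℝ) by norm_num, Real.rpow_natCast, smul_eq_mul]
      ring
    rw [setIntegral_congr_fun measurableSet_Ioi h1, MeasureTheory.integral_const_mul _ _,
      integral_rpow_mul_exp_neg_mul_Ioi (by norm_num : (0:ℝ) < 4) hα]
  rw [hrad]
  have hGamma4 : Real.Gamma 4 = 6 := by
    rw [show (4:ℝ) = ((3:ℕ):ℝ) + 1 by norm_num, Real.Gamma_nat_eq_factorial]
    norm_num [Nat.factorial]
  rw [hGamma4, hK2]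
  rw [show ((1:ℝ)/α)^(4:ℝ) = ((1:ℝ)/α)^(4:ℕ) by
    rw [show (4:ℝ) = ((4:ℕ):ℝ) by norm_num, Real.rpow_natCast]]
  rw [nsmul_eq_mul, smul_eq_mul]
  have hπ : π ≠ 0 := Real.pi_ne_zero
  field_simp
  ring

/-- `⟨x u_α, (h_α - e_α)(x u_α)⟩ = 3`, summing over the three components. -/
theorem inner_xu_h_sub_e_xu (α : ℝ) (hα : 0 < α) :
    ∑ j : Fin 3, ∫ x : EuclideanSpace ℝ (Fin 3),
      (x j * groundState α x) *
        (hydrogenOp α (fun z => z j * groundState α z) x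
          - (-(α ^ 2) / 4) * (x j * groundState α x)) = 3 := by
  have hpoint : ∀ (j : Fin 3) (x : EuclideanSpace ℝ (Fin 3)), x ≠ 0 →
      (x j * groundState α x) * (hydrogenOp α (fun z => z j * groundState α z) x
          - (-(α ^ 2) / 4) * (x j * groundState α x))
        = α * (x j)^2 * (groundState α x)^2 / ‖x‖ := by
    intro j x hx
    have hr : (0:ℝ) < ‖x‖ := norm_pos_iff.2 hx
    simp only [hydrogenOp]
    rw [lap_eq α x hx j]
    field_simp
    ring
  have hmeas : ∀ j : Fin 3, AEStronglyMeasurable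
      (fun x : EuclideanSpace ℝ (Fin 3) => α * (x j)^2 * (groundState α x)^2 / ‖x‖) volume := by
    intro j
    apply Measurable.aestronglyMeasurable
    unfold groundState
    fun_prop
  have hsq : ∀ (j : Fin 3) (x : EuclideanSpace ℝ (Fin 3)), (x j)^2 ≤ ‖x‖^2 := by
    intro j x
    rw [EuclideanSpace.norm_eq, Real.sq_sqrt (by positivity)]
    have h := Finset.single_le_sum (f := fun i => ‖x i‖^2) (fun i _ => sq_nonneg _) (Finset.mem_univ j)
    simpa [Real.norm_eq_abs, sq_abs] using h
  have hInt : ∀ j : Fin 3, Integrable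
      (fun x : EuclideanSpace ℝ (Fin 3) => α * (x j)^2 * (groundState α x)^2 / ‖x‖) := by
    intro j
    refine (F_integrable α hα).mono' (hmeas j) ?_
    filter_upwards with x
    rw [Real.norm_of_nonneg (by positivity)]
    rcases eq_or_ne ‖x‖ 0 with h0 | h0
    · have hx0 : x = 0 := norm_eq_zero.1 h0
      simp [hx0]
    · rw [div_le_iff₀ (lt_of_le_of_ne (norm_nonneg x) (Ne.symm h0))]
      have h1 := hsq j x
      nlinarith [mul_nonneg (mul_nonneg hα.le (sub_nonneg.2 h1)) (sq_nonneg (groundState α x))]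
  have h00 : (volume : Measure (EuclideanSpace ℝ (Fin 3))) {0} = 0 := measure_singleton 0
  have hae : ∀ j : Fin 3, (fun x : EuclideanSpace ℝ (Fin 3) =>
      (x j * groundState α x) * (hydrogenOp α (fun z => z j * groundState α z) x
        - (-(α ^ 2) / 4) * (x j * groundState α x)))
      =ᵐ[volume] (fun x => α * (x j)^2 * (groundState α x)^2 / ‖x‖) := by
    intro j
    have hmem : ({0}ᶜ : Set (EuclideanSpace ℝ (Fin 3))) ∈ ae volume :=
      compl_mem_ae_iff.mpr h00
    filter_upwards [hmem] with x hx
    exact hpoint j x hx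
  calc ∑ j : Fin 3, ∫ x : EuclideanSpace ℝ (Fin 3),
      (x j * groundState α x) *
        (hydrogenOp α (fun z => z j * groundState α z) x
          - (-(α ^ 2) / 4) * (x j * groundState α x))
      = ∑ j : Fin 3, ∫ x : EuclideanSpace ℝ (Fin 3),
          α * (x j)^2 * (groundState α x)^2 / ‖x‖ :=
        Finset.sum_congr rfl (fun j _ => integral_congr_ae (hae j))
    _ = ∫ x : EuclideanSpace ℝ (Fin 3), ∑ j : Fin 3,
          α * (x j)^2 * (groundState α x)^2 / ‖x‖ :=
        (integral_finset_sum _ (fun j _ => hInt j)).symm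
    _ = ∫ x : EuclideanSpace ℝ (Fin 3), α * ‖x‖ * (groundState α x)^2 := by
        apply integral_congr_ae
        apply Filter.Eventually.of_forall
        intro x
        show (∑ j : Fin 3, α * (x j)^2 * (groundState α x)^2 / ‖x‖)
          = α * ‖x‖ * (groundState α x)^2
        rw [Fin.sum_univ_three]
        rcases eq_or_ne ‖x‖ 0 with h0 | h0
        · have hx0 : x = 0 := norm_eq_zero.1 h0
          simp [hx0]
        · have hx2 : x 0^2 + x 1^2 + x 2^2 = ‖x‖^2 := by
            rw [EuclideanSpace.norm_eq, Real.sq_sqrt (by positivity)]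
            simp [Fin.sum_univ_three]
          field_simp
          linear_combination (groundState α x)^2 * hx2
    _ = 3 := F_integral α hα
end

section
/- Let h₁ = -Δ - 1/|x| with ground state u₁ and ground state energy e₁ = -1/4, and assume the spectral gap bound h₁ - e₁ ≥ 3/16 on the orthogonal complement of u₁ (equivalently, on x u₁ since x u₁ ⊥ u₁). Then the quantity ℵ_{α,L} = (1/(6π)) ⟨x u₁, α L arctan(1/(α L (h₁ − e₁))) x u₁⟩ satisfies: (i) if L ≥ (16/3) α^{-1}, then ℵ_{α,L} = (1/(6π)) ‖(h₁ − e₁)^{-1/2} x u₁‖² + O(1/(α²L²)); (ii) if 1 < L ≤ 16/3, then ℵ_{α,L} = α L + O(α² L). -/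
open Real MeasureTheory

lemma arctan_le_self' {x : ℝ} (hx : 0 ≤ x) : Real.arctan x ≤ x := by
  have h : MonotoneOn (fun y : ℝ => y - Real.arctan y) (Set.Ici 0) := by
    apply monotoneOn_of_deriv_nonneg (convex_Ici 0)
    · exact (continuous_id.sub Real.continuous_arctan).continuousOn
    · intro y _
      exact ((hasDerivAt_id' (x:=y)).sub (Real.hasDerivAt_arctan y)).differentiableAt.differentiableWithinAt
    · intro y _
      rw [HasDerivAt.deriv (f := fun y : ℝ => y - Real.arctan y) (((hasDerivAt_id' (x:=y)).sub (Real.hasDerivAt_arctan y)))]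
      have h1 : (0:ℝ) < 1 + y ^ 2 := by positivity
      rw [sub_nonneg, div_le_one h1]
      nlinarith [sq_nonneg y]
  have := h (Set.self_mem_Ici) (Set.mem_Ici.mpr hx) hx
  simpa [Real.arctan_zero] using this

lemma arctan_ge_cubic {x : ℝ} (hx : 0 ≤ x) : x - x ^ 3 / 3 ≤ Real.arctan x := by
  have h : MonotoneOn (fun y : ℝ => Real.arctan y - (y - y ^ 3 / 3)) (Set.Ici 0) := by
    apply monotoneOn_of_deriv_nonneg (convex_Ici 0)
    · exact (Real.continuous_arctan.sub (continuous_id.sub (continuous_pow 3 |>.div_const 3))).continuousOn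
    · intro y _
      exact ((Real.hasDerivAt_arctan y).sub ((hasDerivAt_id' (x:=y)).sub
        ((hasDerivAt_pow 3 y).div_const 3))).differentiableAt.differentiableWithinAt
    · intro y _
      rw [HasDerivAt.deriv (f := fun y : ℝ => Real.arctan y - (y - y ^ 3 / 3)) (((Real.hasDerivAt_arctan y).sub ((hasDerivAt_id' (x:=y)).sub
        ((hasDerivAt_pow 3 y).div_const 3))))]
      have h1 : (0:ℝ) < 1 + y ^ 2 := by positivity
      have h2 : (1:ℝ) - y ^ 2 ≤ 1 / (1 + y ^ 2) := by
        rw [le_div_iff₀ h1]; nlinarith [sq_nonneg (y^2)]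
      push_cast
      nlinarith
  have := h (Set.self_mem_Ici) (Set.mem_Ici.mpr hx) hx
  simp only [Real.arctan_zero] at this
  norm_num at this
  linarith

lemma arctan_nonneg' {x : ℝ} (hx : 0 ≤ x) : 0 ≤ Real.arctan x := by
  simpa [Real.arctan_zero] using Real.arctan_strictMono.monotone hx

/-- Asymptotics of `ℵ_{α,L} = (1/(6π)) ⟨x u₁, αL arctan(1/(αL(h₁−e₁))) x u₁⟩`, stated via
the spectral theorem: `μ` is the spectral measure of `h₁ − e₁` in the state `x u₁`, a finite
measure supported in `[3/16, ∞)` with total mass `‖x u₁‖² = 12` and first moment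
`⟨x u₁, (h₁−e₁) x u₁⟩ = 3`. Then:
(i) if `L ≥ (16/3)α⁻¹`, `ℵ_{α,L} = (1/(6π)) ‖(h₁−e₁)^{-1/2} x u₁‖² + O(1/(α²L²))`;
(ii) if `1 < L ≤ 16/3`, `ℵ_{α,L} = αL + O(α²L)`. -/
theorem aleph_asymptotics (μ : Measure ℝ) [IsFiniteMeasure μ]
    (hsupp : ∀ᵐ l ∂μ, (3 : ℝ) / 16 ≤ l)
    (hmass : (μ Set.univ).toReal = 12)
    (hint : Integrable id μ)
    (hmom : ∫ l, l ∂μ = 3) :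
    ∃ C > (0 : ℝ), ∀ α L : ℝ, 0 < α → α < 1 →
      ((16 / 3) * α⁻¹ ≤ L →
        |(1 / (6 * π)) * (∫ l, α * L * Real.arctan (1 / (α * L * l)) ∂μ)
            - (1 / (6 * π)) * ∫ l, l⁻¹ ∂μ| ≤ C / (α ^ 2 * L ^ 2)) ∧
      (1 < L → L ≤ 16 / 3 →
        |(1 / (6 * π)) * (∫ l, α * L * Real.arctan (1 / (α * L * l)) ∂μ)
            - α * L| ≤ C * α ^ 2 * L) := by
  have hπ : (3:ℝ) < π := Real.pi_gt_three
  have hπ0 : (0:ℝ) < π := by linarith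
  refine ⟨100, by norm_num, fun α L hα hα1 => ?_⟩
  -- common setup (needs L > 0, provided in each branch)
  have main : ∀ hL0 : 0 < L, True := fun _ => trivial
  constructor
  · -- part (i)
    intro hL
    have hL0 : 0 < L := lt_of_lt_of_le (by positivity) hL
    set s : ℝ := α * L with hs
    have hs0 : 0 < s := mul_pos hα hL0
    -- measurability / integrability
    have hmf : Measurable fun l : ℝ => s * Real.arctan (1 / (s * l)) := by
      exact measurable_const.mul (Real.continuous_arctan.measurable.comp
        ((measurable_const.mul measurable_id).inv.const_mul 1))
    have hif : Integrable (fun l : ℝ => s * Real.arctan (1 / (s * l))) μ := by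
      refine Integrable.mono' (integrable_const (s * (π / 2))) hmf.aestronglyMeasurable ?_
      filter_upwards with l
      rw [Real.norm_eq_abs, abs_mul, abs_of_pos hs0]
      have hb : |Real.arctan (1 / (s * l))| ≤ π / 2 :=
        abs_le.mpr ⟨(Real.neg_pi_div_two_lt_arctan _).le, (Real.arctan_lt_pi_div_two _).le⟩
      exact mul_le_mul_of_nonneg_left hb hs0.le
    have hig : Integrable (fun l : ℝ => l⁻¹) μ := by
      refine Integrable.mono' (integrable_const (16/3 : ℝ)) measurable_inv.aestronglyMeasurable ?_
      filter_upwards [hsupp] with l hl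
      have hl0 : (0:ℝ) < l := by linarith
      rw [Real.norm_eq_abs, abs_of_pos (by positivity)]
      rw [inv_le_comm₀ (by positivity) (by norm_num)]
      linarith
    have key : ∀ᵐ l ∂μ, ‖(fun l : ℝ => s * Real.arctan (1 / (s * l))) l - l⁻¹‖
        ≤ (4096/81) / s ^ 2 := by
      filter_upwards [hsupp] with l hl
      have hl0 : (0:ℝ) < l := by linarith
      have hu0 : (0:ℝ) < 1 / (s * l) := by positivity
      have hup : s * Real.arctan (1 / (s * l)) ≤ l⁻¹ := by
        have := arctan_le_self' hu0.le
        calc s * Real.arctan (1 / (s * l)) ≤ s * (1 / (s * l)) :=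
              mul_le_mul_of_nonneg_left this hs0.le
          _ = l⁻¹ := by field_simp
      have hdn : l⁻¹ - 1 / (3 * s ^ 2 * l ^ 3) ≤ s * Real.arctan (1 / (s * l)) := by
        have := arctan_ge_cubic hu0.le
        have h2 : s * (1 / (s * l) - (1 / (s * l)) ^ 3 / 3) ≤ s * Real.arctan (1 / (s * l)) :=
          mul_le_mul_of_nonneg_left this hs0.le
        have h3 : s * (1 / (s * l) - (1 / (s * l)) ^ 3 / 3)
            = l⁻¹ - 1 / (3 * s ^ 2 * l ^ 3) := by
          field_simp
        linarith [h3 ▸ h2]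
      have hbd : 1 / (3 * s ^ 2 * l ^ 3) ≤ (4096/81) / s ^ 2 := by
        rw [div_le_div_iff₀ (by positivity) (by positivity)]
        nlinarith [sq_nonneg s, sq_nonneg l, pow_le_pow_left₀ (by norm_num : (0:ℝ) ≤ 3/16) hl 3,
          sq_nonneg (s*l)]
      have habs : |s * Real.arctan (1 / (s * l)) - l⁻¹| ≤ (4096/81) / s ^ 2 :=
        abs_le.mpr ⟨by linarith, by linarith⟩
      simpa [Real.norm_eq_abs] using habs
    have hmain : ‖∫ l, (s * Real.arctan (1 / (s * l)) - l⁻¹) ∂μ‖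
        ≤ ((4096/81) / s ^ 2) * (μ Set.univ).toReal :=
      norm_integral_le_of_norm_le_const key
    rw [integral_sub hif hig] at hmain
    rw [hmass, Real.norm_eq_abs] at hmain
    have hrw : (1 / (6 * π)) * (∫ l, α * L * Real.arctan (1 / (α * L * l)) ∂μ)
            - (1 / (6 * π)) * ∫ l, l⁻¹ ∂μ
        = (1 / (6 * π)) * ((∫ l, s * Real.arctan (1 / (s * l)) ∂μ) - ∫ l, l⁻¹ ∂μ) := by
      rw [hs]; ring
    rw [hrw, abs_mul, abs_of_pos (by positivity : (0:ℝ) < 1 / (6 * π))]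
    have hseq : s ^ 2 = α ^ 2 * L ^ 2 := by rw [hs]; ring
    calc (1 / (6 * π)) * |(∫ l, s * Real.arctan (1 / (s * l)) ∂μ) - ∫ l, l⁻¹ ∂μ|
        ≤ (1 / (6 * π)) * ((4096/81) / s ^ 2 * 12) := by
          apply mul_le_mul_of_nonneg_left _ (by positivity)
          exact hmain
      _ = ((4096 * 12 / 81) / (6 * π)) / (α ^ 2 * L ^ 2) := by rw [← hseq]; ring
      _ ≤ 100 / (α ^ 2 * L ^ 2) := by
          gcongr
          rw [div_le_iff₀ (by positivity)]
          nlinarith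
  · -- part (ii)
    intro hL1 hL2
    have hL0 : 0 < L := by linarith
    set s : ℝ := α * L with hs
    have hs0 : 0 < s := mul_pos hα hL0
    have hmf2 : Measurable fun l : ℝ => Real.arctan (s * l) :=
      Real.continuous_arctan.measurable.comp (measurable_const.mul measurable_id)
    have hia : Integrable (fun l : ℝ => Real.arctan (s * l)) μ := by
      refine Integrable.mono' (integrable_const (π / 2)) hmf2.aestronglyMeasurable ?_
      filter_upwards with l
      exact abs_le.mpr ⟨(Real.neg_pi_div_two_lt_arctan _).le, (Real.arctan_lt_pi_div_two _).le⟩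
    have hcongr : ∫ l, α * L * Real.arctan (1 / (α * L * l)) ∂μ
        = ∫ l, (s * (π / 2) - s * Real.arctan (s * l)) ∂μ := by
      apply integral_congr_ae
      filter_upwards [hsupp] with l hl
      have hl0 : (0:ℝ) < s * l := by nlinarith
      rw [one_div, Real.arctan_inv_of_pos hl0, hs]
      ring
    have hI : ∫ l, (s * (π / 2) - s * Real.arctan (s * l)) ∂μ
        = s * (π / 2) * 12 - s * ∫ l, Real.arctan (s * l) ∂μ := by
      rw [integral_sub (integrable_const _) (hia.const_mul s), integral_const,
        integral_const_mul, Measure.real, hmass]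
      rw [smul_eq_mul]; ring
    set I : ℝ := ∫ l, Real.arctan (s * l) ∂μ with hIdef
    have hI0 : 0 ≤ I := by
      apply integral_nonneg_of_ae
      filter_upwards [hsupp] with l hl
      exact arctan_nonneg' (by nlinarith)
    have hI3 : I ≤ 3 * s := by
      have : I ≤ ∫ l, s * l ∂μ := by
        apply integral_mono_ae hia (hint.const_mul s)
        filter_upwards [hsupp] with l hl
        exact arctan_le_self' (by nlinarith)
      rwa [integral_const_mul, hmom, mul_comm s 3] at this
    have hexpr : (1 / (6 * π)) * (∫ l, α * L * Real.arctan (1 / (α * L * l)) ∂μ) - α * L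
        = -(s * I) / (6 * π) := by
      rw [hcongr, hI, hs]
      field_simp
      ring
    rw [hexpr, abs_div, abs_neg, abs_of_pos (by positivity : (0:ℝ) < 6 * π),
      abs_mul, abs_of_pos hs0, abs_of_nonneg hI0]
    rw [div_le_iff₀ (by positivity)]
    have : s * I ≤ s * (3 * s) := mul_le_mul_of_nonneg_left hI3 hs0.le
    have hss : s * (3 * s) = 3 * α ^ 2 * L * L := by rw [hs]; ring
    nlinarith [mul_pos (mul_pos hα hα) hL0, sq_nonneg α]
end

section
/- Let λ_y ∈ L²(ℝ⁺×ℝ²; ℂ²) be given componentwise by λ_{y,γ}(k) = 2 χ_Λ(k)/(√2 π |k|^{1/2}) · (e_γ^{(1)}(k) cos(k₁y), −e_γ^{(2)}(k) sin(k₁y), −e_γ^{(3)}(k) sin(k₁y)) (a ℂ³-valued density, with the ℂ² index γ = 1,2), and λ_∞,γ(k) = χ_Λ(k)/(√2 π |k|^{1/2}) e_γ(k) on ℝ³. Then ‖λ_y‖² − ‖λ_∞‖² = ∫_{ℝ³} f_y(k) dk, where f_y(k) = (1/(2π²)) (χ_Λ(k)²/|k|) (−1 − k̂₁² + k̂₂²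 + k̂₃²) cos(2k₁y), with k̂ = k/|k|. -/
open Real MeasureTheory

set_option maxHeartbeats 1000000

open Real MeasureTheory

lemma aux_norm_sq (k : EuclideanSpace ℝ (Fin 3)) :
    (k 0) ^ 2 + (k 1) ^ 2 + (k 2) ^ 2 = ‖k‖ ^ 2 := by
  rw [EuclideanSpace.norm_eq, Real.sq_sqrt (by positivity)]
  simp [Fin.sum_univ_three, sq_abs]

lemma aux_coord_le (k : EuclideanSpace ℝ (Fin 3)) (j : Fin 3) : |k j| ≤ ‖k‖ := by
  have h := aux_norm_sq k
  have h2 : (k j) ^ 2 ≤ ‖k‖ ^ 2 := by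
    fin_cases j
    · show (k 0) ^ 2 ≤ ‖k‖ ^ 2; nlinarith [sq_nonneg (k 1), sq_nonneg (k 2)]
    · show (k 1) ^ 2 ≤ ‖k‖ ^ 2; nlinarith [sq_nonneg (k 0), sq_nonneg (k 2)]
    · show (k 2) ^ 2 ≤ ‖k‖ ^ 2; nlinarith [sq_nonneg (k 0), sq_nonneg (k 1)]
  calc |k j| = Real.sqrt ((k j) ^ 2) := (Real.sqrt_sq_eq_abs _).symm
    _ ≤ Real.sqrt (‖k‖ ^ 2) := Real.sqrt_le_sqrt h2
    _ = ‖k‖ := Real.sqrt_sq (norm_nonneg k)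

lemma aux_hyperplane (j : Fin 3) :
    volume {k : EuclideanSpace ℝ (Fin 3) | k j = 0} = 0 := by
  have hset : {k : EuclideanSpace ℝ (Fin 3) | k j = 0}
      = (LinearMap.ker (EuclideanSpace.projₗ j :
          EuclideanSpace ℝ (Fin 3) →ₗ[ℝ] ℝ) : Set (EuclideanSpace ℝ (Fin 3))) := by
    ext k; simp [LinearMap.mem_ker]
  rw [hset]
  refine Measure.addHaar_submodule _ _ ?_
  intro htop
  have hmem : EuclideanSpace.single j (1 : ℝ) ∈
      LinearMap.ker (EuclideanSpace.projₗ j : EuclideanSpace ℝ (Fin 3) →ₗ[ℝ] ℝ) := by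
    rw [htop]; trivial
  simp [LinearMap.mem_ker, EuclideanSpace.single_apply] at hmem

noncomputable def negFirst : EuclideanSpace ℝ (Fin 3) ≃ₗᵢ[ℝ] EuclideanSpace ℝ (Fin 3) :=
  LinearIsometryEquiv.piLpCongrRight 2
    (fun i : Fin 3 => if i = 0 then LinearIsometryEquiv.neg ℝ else LinearIsometryEquiv.refl ℝ ℝ)

lemma negFirst_apply_zero (k : EuclideanSpace ℝ (Fin 3)) : negFirst k 0 = -(k 0) := by
  simp [negFirst, LinearIsometryEquiv.piLpCongrRight_apply]

lemma negFirst_apply_one (k : EuclideanSpace ℝ (Fin 3)) : negFirst k 1 = k 1 := by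
  simp [negFirst, LinearIsometryEquiv.piLpCongrRight_apply]

lemma negFirst_apply_two (k : EuclideanSpace ℝ (Fin 3)) : negFirst k 2 = k 2 := by
  simp [negFirst, LinearIsometryEquiv.piLpCongrRight_apply]

lemma aux_ae_ne (j : Fin 3) : ∀ᵐ k : EuclideanSpace ℝ (Fin 3), k j ≠ 0 := by
  rw [ae_iff]
  have h : {k : EuclideanSpace ℝ (Fin 3) | ¬ k j ≠ 0} = {k : EuclideanSpace ℝ (Fin 3) | k j = 0} := by
    ext k; simp
  rw [h]
  exact aux_hyperplane j

lemma aux_half (g : EuclideanSpace ℝ (Fin 3) → ℝ) (hg : Integrable g)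
    (heven : ∀ k, g (negFirst k) = g k) :
    ∫ k, g k = 2 * ∫ k in {k : EuclideanSpace ℝ (Fin 3) | 0 < k 0}, g k := by
  have hm0 : Measurable (fun k : EuclideanSpace ℝ (Fin 3) => k 0) :=
    (EuclideanSpace.proj (0 : Fin 3)).continuous.measurable
  have hS : MeasurableSet {k : EuclideanSpace ℝ (Fin 3) | 0 < k 0} :=
    measurableSet_lt measurable_const hm0
  have h1 := integral_add_compl hS hg
  have hpre : (negFirst) ⁻¹' ({k : EuclideanSpace ℝ (Fin 3) | 0 < k 0}ᶜ)
      = {k : EuclideanSpace ℝ (Fin 3) | 0 ≤ k 0} := by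
    ext k
    simp [negFirst_apply_zero, not_lt, neg_nonpos]
  have h2 : ∫ k in {k : EuclideanSpace ℝ (Fin 3) | 0 ≤ k 0}, g k
      = ∫ k in {k : EuclideanSpace ℝ (Fin 3) | 0 < k 0}ᶜ, g k := by
    have h := (negFirst.measurePreserving).setIntegral_preimage_emb
      (negFirst.toHomeomorph.measurableEmbedding) g
      ({k : EuclideanSpace ℝ (Fin 3) | 0 < k 0}ᶜ)
    rw [hpre] at h
    simpa only [heven] using h
  have h3 : ∫ k in {k : EuclideanSpace ℝ (Fin 3) | 0 ≤ k 0}, g k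
      = ∫ k in {k : EuclideanSpace ℝ (Fin 3) | 0 < k 0}, g k := by
    apply setIntegral_congr_set
    have hne := aux_ae_ne 0
    rw [Filter.eventuallyEq_set]
    filter_upwards [hne] with k hk
    exact ⟨fun h => lt_of_le_of_ne h (Ne.symm hk), le_of_lt⟩
  linarith [h1, h2, h3]
lemma aux_parseval (k : EuclideanSpace ℝ (Fin 3)) (hk : k ≠ 0)
    (e0 e1 : EuclideanSpace ℝ (Fin 3))
    (h00 : ‖e0‖ = 1) (h11 : ‖e1‖ = 1) (h01 : inner ℝ e0 e1 = (0 : ℝ))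
    (hk0 : inner ℝ k e0 = (0 : ℝ)) (hk1 : inner ℝ k e1 = (0 : ℝ)) (j : Fin 3) :
    (e0 j) ^ 2 + (e1 j) ^ 2 = 1 - (k j / ‖k‖) ^ 2 := by
  have hkn : ‖k‖ ≠ 0 := norm_ne_zero_iff.mpr hk
  set u : EuclideanSpace ℝ (Fin 3) := ‖k‖⁻¹ • k with hu
  have huu : inner ℝ u u = (1 : ℝ) := by
    rw [hu, real_inner_smul_left, real_inner_smul_right, real_inner_self_eq_norm_sq]
    field_simp
  have hue0 : inner ℝ u e0 = (0 : ℝ) := by rw [hu, real_inner_smul_left, hk0, mul_zero]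
  have hue1 : inner ℝ u e1 = (0 : ℝ) := by rw [hu, real_inner_smul_left, hk1, mul_zero]
  have he0u : inner ℝ e0 u = (0 : ℝ) := by rw [real_inner_comm]; exact hue0
  have he1u : inner ℝ e1 u = (0 : ℝ) := by rw [real_inner_comm]; exact hue1
  have he10 : inner ℝ e1 e0 = (0 : ℝ) := by rw [real_inner_comm]; exact h01
  have he00 : inner ℝ e0 e0 = (1 : ℝ) := by
    rw [real_inner_self_eq_norm_sq, h00]; norm_num
  have he11 : inner ℝ e1 e1 = (1 : ℝ) := by
    rw [real_inner_self_eq_norm_sq, h11]; norm_num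
  have hun : ‖u‖ = 1 := by rw [hu, norm_smul, norm_inv, norm_norm, inv_mul_cancel₀ hkn]
  have hv : Orthonormal ℝ ![u, e0, e1] := by
    rw [orthonormal_iff_ite]
    intro i j'
    fin_cases i <;> fin_cases j' <;>
      simp [huu, hue0, hue1, he0u, he1u, h01, he10, he00, he11, hun, h00, h11]
  have hcard : Fintype.card (Fin 3) = Module.finrank ℝ (EuclideanSpace ℝ (Fin 3)) := by
    simp [finrank_euclideanSpace_fin]
  let b0 := basisOfOrthonormalOfCardEqFinrank hv hcard
  have hb0 : ⇑b0 = ![u, e0, e1] := coe_basisOfOrthonormalOfCardEqFinrank hv hcard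
  let b := b0.toOrthonormalBasis (by rwa [hb0])
  have hb : ⇑b = ![u, e0, e1] := by rw [Module.Basis.coe_toOrthonormalBasis, hb0]
  have hp := b.sum_inner_mul_inner (EuclideanSpace.single j (1 : ℝ))
    (EuclideanSpace.single j (1 : ℝ))
  rw [Fin.sum_univ_three] at hp
  simp only [hb, EuclideanSpace.inner_single_left, EuclideanSpace.inner_single_right,
    map_one, one_mul, Matrix.cons_val_zero, Matrix.cons_val_one, Matrix.head_cons,
    Matrix.cons_val_two, Matrix.tail_cons, EuclideanSpace.single_apply, if_pos rfl,
    conj_trivial, if_true] at hp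
  have huj : u j = ‖k‖⁻¹ * k j := by rw [hu]; simp
  rw [huj] at hp
  linear_combination hp
/-- `‖λ_y‖² − ‖λ_∞‖² = ∫_{ℝ³} f_y(k) dk`, where
`f_y(k) = (1/(2π²))(χ_Λ(k)²/|k|)(−1 − k̂₁² + k̂₂² + k̂₃²) cos(2k₁y)`. The norms are written
out explicitly: `‖λ_y‖²` is an integral over the half-space `{k₁ > 0}` and `‖λ_∞‖²` over
`ℝ³`, with `(e₁(k), e₂(k))` polarization vectors making `(k̂, e₁(k), e₂(k))` orthonormal
and `χ` a radial cutoff supported in `{|k| ≤ Λ}`. -/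
theorem lambda_norm_difference (Λ y : ℝ) (hΛ : 0 < Λ) (hy : 0 < y)
    (χ : EuclideanSpace ℝ (Fin 3) → ℝ) (hχc : Continuous χ)
    (hχsupp : ∀ k, Λ < ‖k‖ → χ k = 0)
    (hχrad : ∀ k k' : EuclideanSpace ℝ (Fin 3), ‖k‖ = ‖k'‖ → χ k = χ k')
    (e : Fin 2 → EuclideanSpace ℝ (Fin 3) → EuclideanSpace ℝ (Fin 3))
    (hmeas : ∀ γ, Measurable (e γ))
    (honb : ∀ k : EuclideanSpace ℝ (Fin 3), k ≠ 0 →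
      ‖e 0 k‖ = 1 ∧ ‖e 1 k‖ = 1 ∧ inner ℝ (e 0 k) (e 1 k) = (0 : ℝ) ∧
      inner ℝ k (e 0 k) = (0 : ℝ) ∧ inner ℝ k (e 1 k) = (0 : ℝ)) :
    (∑ γ : Fin 2, ∫ k in {k : EuclideanSpace ℝ (Fin 3) | 0 < k 0},
        (4 * (χ k) ^ 2 / (2 * π ^ 2 * ‖k‖)) *
          ((e γ k 0) ^ 2 * (Real.cos (k 0 * y)) ^ 2
            + ((e γ k 1) ^ 2 + (e γ k 2) ^ 2) * (Real.sin (k 0 * y)) ^ 2))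
      - (∑ γ : Fin 2, ∫ k : EuclideanSpace ℝ (Fin 3),
          ((χ k) ^ 2 / (2 * π ^ 2 * ‖k‖)) * ‖e γ k‖ ^ 2)
      = ∫ k : EuclideanSpace ℝ (Fin 3),
          (1 / (2 * π ^ 2)) * ((χ k) ^ 2 / ‖k‖) *
            (-1 - (k 0 / ‖k‖) ^ 2 + (k 1 / ‖k‖) ^ 2 + (k 2 / ‖k‖) ^ 2) *
            Real.cos (2 * k 0 * y) := by
  -- abbreviations
  set S : Set (EuclideanSpace ℝ (Fin 3)) := {k : EuclideanSpace ℝ (Fin 3) | 0 < k 0} with hSdef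
  set M : EuclideanSpace ℝ (Fin 3) → ℝ := fun k => (χ k) ^ 2 / (2 * π ^ 2 * ‖k‖) with hMdef
  set F : Fin 2 → EuclideanSpace ℝ (Fin 3) → ℝ := fun γ k =>
      (4 * (χ k) ^ 2 / (2 * π ^ 2 * ‖k‖)) *
        ((e γ k 0) ^ 2 * (Real.cos (k 0 * y)) ^ 2
          + ((e γ k 1) ^ 2 + (e γ k 2) ^ 2) * (Real.sin (k 0 * y)) ^ 2) with hFdef
  set G : EuclideanSpace ℝ (Fin 3) → ℝ := fun k =>
      M k * ((-1 - (k 0 / ‖k‖) ^ 2 + (k 1 / ‖k‖) ^ 2 + (k 2 / ‖k‖) ^ 2) *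
        Real.cos (2 * k 0 * y)) with hGdef
  have hπ : (0:ℝ) < π := Real.pi_pos
  have mcoord : ∀ j : Fin 3, Measurable fun k : EuclideanSpace ℝ (Fin 3) => k j :=
    fun j => (EuclideanSpace.proj j).continuous.measurable
  have hmnorm : Measurable fun k : EuclideanSpace ℝ (Fin 3) => ‖k‖ := measurable_norm
  have hmM : Measurable M := by
    rw [hMdef]
    exact (hχc.measurable.pow_const 2).div (hmnorm.const_mul (2 * π ^ 2))
  have hSm : MeasurableSet S := measurableSet_lt measurable_const (mcoord 0)
  -- pointwise facts
  have haene : ∀ᵐ k : EuclideanSpace ℝ (Fin 3), k ≠ 0 := by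
    filter_upwards [aux_ae_ne 0] with k hk h
    rw [h] at hk
    simp at hk
  have hesum : ∀ k : EuclideanSpace ℝ (Fin 3), k ≠ 0 → ∀ j : Fin 3,
      (e 0 k j) ^ 2 + (e 1 k j) ^ 2 = 1 - (k j / ‖k‖) ^ 2 := by
    intro k hk j
    obtain ⟨h00, h11, h01, hk0, hk1⟩ := honb k hk
    exact aux_parseval k hk (e 0 k) (e 1 k) h00 h11 h01 hk0 hk1 j
  have hhat : ∀ k : EuclideanSpace ℝ (Fin 3), k ≠ 0 →
      (k 0 / ‖k‖) ^ 2 + (k 1 / ‖k‖) ^ 2 + (k 2 / ‖k‖) ^ 2 = 1 := by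
    intro k hk
    have h := aux_norm_sq k
    have hkn : ‖k‖ ≠ 0 := norm_ne_zero_iff.mpr hk
    field_simp
    linarith [h]
  have hcomp : ∀ (γ : Fin 2) (k : EuclideanSpace ℝ (Fin 3)), k ≠ 0 → ∀ j : Fin 3,
      (e γ k j) ^ 2 ≤ 1 := by
    intro γ k hk j
    have h := hesum k hk j
    have hq := sq_nonneg (k j / ‖k‖)
    have h0 : (e 0 k j) ^ 2 ≤ 1 := by nlinarith [sq_nonneg (e 1 k j)]
    have h1 : (e 1 k j) ^ 2 ≤ 1 := by nlinarith [sq_nonneg (e 0 k j)]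
    fin_cases γ
    · exact h0
    · exact h1
  -- bound for χ
  have hsupp : HasCompactSupport χ :=
    HasCompactSupport.intro (isCompact_closedBall (0 : EuclideanSpace ℝ (Fin 3)) Λ)
      (fun x hx => hχsupp x (by
        simpa [Metric.mem_closedBall, dist_zero_right, not_le] using hx))
  obtain ⟨Cb, hCb⟩ := hsupp.exists_bound_of_continuous hχc
  -- the dominating function
  set g1 : ℝ → ℝ := Set.indicator (Set.Icc (-Λ) Λ) (fun t => |t| ^ (-(1/2) : ℝ)) with hg1def
  set g2 : ℝ → ℝ := Set.indicator (Set.Icc (-Λ) Λ) (fun _ => (1:ℝ)) with hg2def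
  have hg1nn : ∀ t, 0 ≤ g1 t := fun t =>
    Set.indicator_nonneg (fun s _ => Real.rpow_nonneg (abs_nonneg s) _) t
  have hg2nn : ∀ t, 0 ≤ g2 t := fun t => Set.indicator_nonneg (fun s _ => zero_le_one) t
  have hg1int : Integrable g1 := by
    rw [hg1def, integrable_indicator_iff measurableSet_Icc]
    have h1 : IntervalIntegrable (fun t : ℝ => |t| ^ (-(1/2):ℝ)) volume 0 Λ := by
      have h := intervalIntegral.intervalIntegrable_rpow' (a := 0) (b := Λ)
        (r := -(1/2)) (by norm_num)
      rw [intervalIntegrable_iff_integrableOn_Ioc_of_le hΛ.le] at h ⊢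
      exact h.congr_fun (fun t ht => by rw [abs_of_pos ht.1]) measurableSet_Ioc
    have h2 : IntervalIntegrable (fun t : ℝ => |t| ^ (-(1/2):ℝ)) volume (-Λ) 0 := by
      have h := (IntervalIntegrable.iff_comp_neg enorm_ne_top).mp h1
      simp only [abs_neg, neg_zero] at h
      exact h.symm
    have h3 := h2.trans h1
    rwa [intervalIntegrable_iff_integrableOn_Icc_of_le (by linarith)] at h3
  have hg2int : Integrable g2 := by
    rw [hg2def, integrable_indicator_iff measurableSet_Icc]
    exact (integrableOn_const_iff (C := (1:ℝ)) enorm_ne_top).mpr (Or.inr measure_Icc_lt_top)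
  have hprod : Integrable (fun x : Fin 3 → ℝ => ∏ i, ![g1, g1, g2] i (x i)) :=
    Integrable.fintype_prod (f := ![g1, g1, g2]) (fun i => by
      fin_cases i
      · exact hg1int
      · exact hg1int
      · exact hg2int)
  set D : EuclideanSpace ℝ (Fin 3) → ℝ := fun k => g1 (k 0) * g1 (k 1) * g2 (k 2) with hDdef
  have hDint : Integrable D := by
    have hφ := EuclideanSpace.volume_preserving_symm_measurableEquiv_toLp (Fin 3)
    have h := (hφ.integrable_comp_emb
      (MeasurableEquiv.toLp 2 (Fin 3 → ℝ)).symm.measurableEmbedding).mpr hprod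
    have heq : ((fun x : Fin 3 → ℝ => ∏ i, ![g1, g1, g2] i (x i))
        ∘ (MeasurableEquiv.toLp 2 (Fin 3 → ℝ)).symm) = D := by
      funext k
      simp [Fin.prod_univ_three, hDdef]
    rwa [heq] at h
  have hDnn : ∀ k, 0 ≤ D k := fun k =>
    mul_nonneg (mul_nonneg (hg1nn _) (hg1nn _)) (hg2nn _)
  -- pointwise domination of M by D
  have hMnn : ∀ k, 0 ≤ M k := fun k => div_nonneg (sq_nonneg _) (by positivity)
  have hMD : ∀ k : EuclideanSpace ℝ (Fin 3), k 0 ≠ 0 → k 1 ≠ 0 → M k ≤ Cb ^ 2 * D k := by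
    intro k h0 h1
    by_cases hΛk : ‖k‖ ≤ Λ
    · have hmem : ∀ j : Fin 3, k j ∈ Set.Icc (-Λ) Λ := fun j =>
        Set.mem_Icc.mpr (abs_le.mp ((aux_coord_le k j).trans hΛk))
      have e0' : g1 (k 0) = |k 0| ^ (-(1/2):ℝ) := by
        rw [hg1def]; exact Set.indicator_of_mem (hmem 0) _
      have e1' : g1 (k 1) = |k 1| ^ (-(1/2):ℝ) := by
        rw [hg1def]; exact Set.indicator_of_mem (hmem 1) _
      have e2' : g2 (k 2) = 1 := by
        rw [hg2def]; exact Set.indicator_of_mem (hmem 2) _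
      have hab0 : 0 < |k 0| := abs_pos.mpr h0
      have hab1 : 0 < |k 1| := abs_pos.mpr h1
      have hkpos : 0 < ‖k‖ := lt_of_lt_of_le hab0 (aux_coord_le k 0)
      have hχle : (χ k) ^ 2 ≤ Cb ^ 2 := by
        have h := hCb k
        rw [Real.norm_eq_abs] at h
        nlinarith [abs_nonneg (χ k), abs_abs (χ k), sq_abs (χ k)]
      have key : 1 / ‖k‖ ≤ |k 0| ^ (-(1/2):ℝ) * |k 1| ^ (-(1/2):ℝ) := by
        set s := |k 0| ^ ((1/2):ℝ) with hs
        set t := |k 1| ^ ((1/2):ℝ) with ht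
        have hsp : 0 < s := Real.rpow_pos_of_pos hab0 _
        have htp : 0 < t := Real.rpow_pos_of_pos hab1 _
        have hs2 : s ^ 2 = |k 0| := by
          rw [hs, ← Real.rpow_natCast (|k 0| ^ ((1/2):ℝ)) 2, ← Real.rpow_mul (abs_nonneg _)]
          norm_num
        have ht2 : t ^ 2 = |k 1| := by
          rw [ht, ← Real.rpow_natCast (|k 1| ^ ((1/2):ℝ)) 2, ← Real.rpow_mul (abs_nonneg _)]
          norm_num
        have hst : s * t ≤ ‖k‖ := by
          nlinarith [aux_coord_le k 0, aux_coord_le k 1, sq_nonneg (s - t), norm_nonneg k]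
        have hneg0 : |k 0| ^ (-(1/2):ℝ) = s⁻¹ := by
          rw [hs, ← Real.rpow_neg (abs_nonneg _)]
        have hneg1 : |k 1| ^ (-(1/2):ℝ) = t⁻¹ := by
          rw [ht, ← Real.rpow_neg (abs_nonneg _)]
        rw [hneg0, hneg1, ← mul_inv, one_div]
        exact inv_anti₀ (by positivity) hst
      have hmain : M k ≤ Cb ^ 2 * (|k 0| ^ (-(1/2):ℝ) * |k 1| ^ (-(1/2):ℝ)) := by
        have h2π : (1:ℝ) ≤ 2 * π ^ 2 := by nlinarith [Real.pi_gt_three]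
        calc M k = (χ k) ^ 2 / (2 * π ^ 2 * ‖k‖) := by rw [hMdef]
          _ ≤ Cb ^ 2 / (2 * π ^ 2 * ‖k‖) := by gcongr
          _ ≤ Cb ^ 2 / ‖k‖ := by
              gcongr
              nlinarith [h2π, hkpos.le, mul_nonneg (sub_nonneg.mpr h2π) hkpos.le]
          _ = Cb ^ 2 * (1 / ‖k‖) := by ring
          _ ≤ Cb ^ 2 * (|k 0| ^ (-(1/2):ℝ) * |k 1| ^ (-(1/2):ℝ)) := by
              exact mul_le_mul_of_nonneg_left key (sq_nonneg Cb)
      calc M k ≤ Cb ^ 2 * (|k 0| ^ (-(1/2):ℝ) * |k 1| ^ (-(1/2):ℝ)) := hmain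
        _ = Cb ^ 2 * D k := by rw [hDdef]; simp only; rw [e0', e1', e2']; ring
    · have hzero : χ k = 0 := hχsupp k (not_le.mp hΛk)
      have : M k = 0 := by rw [hMdef]; simp only; rw [hzero]; simp
      rw [this]
      exact mul_nonneg (sq_nonneg Cb) (hDnn k)
  -- integrability criterion
  have hae01 : ∀ᵐ k : EuclideanSpace ℝ (Fin 3), k 0 ≠ 0 ∧ k 1 ≠ 0 :=
    (aux_ae_ne 0).and (aux_ae_ne 1)
  have hint : ∀ (f : EuclideanSpace ℝ (Fin 3) → ℝ) (C : ℝ), 0 ≤ C →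
      AEStronglyMeasurable f volume →
      (∀ k, k 0 ≠ 0 → k 1 ≠ 0 → |f k| ≤ C * M k) → Integrable f := by
    intro f C hC hfm hfb
    apply Integrable.mono' (hDint.const_mul (C * Cb ^ 2)) hfm
    filter_upwards [hae01] with k hk
    calc ‖f k‖ = |f k| := Real.norm_eq_abs _
      _ ≤ C * M k := hfb k hk.1 hk.2
      _ ≤ C * (Cb ^ 2 * D k) := mul_le_mul_of_nonneg_left (hMD k hk.1 hk.2) hC
      _ = C * Cb ^ 2 * D k := by ring
  -- the four integrable functions
  have hMint : Integrable M :=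
    hint M 1 zero_le_one hmM.aestronglyMeasurable
      (fun k h0 h1 => by rw [abs_of_nonneg (hMnn k), one_mul])
  have hFint : ∀ γ : Fin 2, Integrable (F γ) := by
    intro γ
    have hmcos : Measurable fun k : EuclideanSpace ℝ (Fin 3) => Real.cos (k 0 * y) :=
      Real.continuous_cos.measurable.comp ((mcoord 0).mul_const y)
    have hmsin : Measurable fun k : EuclideanSpace ℝ (Fin 3) => Real.sin (k 0 * y) :=
      Real.continuous_sin.measurable.comp ((mcoord 0).mul_const y)
    have hme : ∀ j : Fin 3, Measurable fun k => e γ k j := fun j => (mcoord j).comp (hmeas γ)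
    have hmF : Measurable (F γ) := by
      rw [hFdef]
      exact (((hχc.measurable.pow_const 2).const_mul 4).div (hmnorm.const_mul (2 * π ^ 2))).mul
        ((((hme 0).pow_const 2).mul (hmcos.pow_const 2)).add
          ((((hme 1).pow_const 2).add ((hme 2).pow_const 2)).mul (hmsin.pow_const 2)))
    apply hint (F γ) 12 (by norm_num) hmF.aestronglyMeasurable
    intro k h0 h1
    have hkne : k ≠ 0 := by
      intro h
      rw [h] at h0
      simp at h0
    have hc0 := hcomp γ k hkne 0
    have hc1 := hcomp γ k hkne 1
    have hc2 := hcomp γ k hkne 2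
    have htrig := Real.sin_sq_add_cos_sq (k 0 * y)
    have hBnn : 0 ≤ (e γ k 0) ^ 2 * (Real.cos (k 0 * y)) ^ 2
        + ((e γ k 1) ^ 2 + (e γ k 2) ^ 2) * (Real.sin (k 0 * y)) ^ 2 := by positivity
    have hB3 : (e γ k 0) ^ 2 * (Real.cos (k 0 * y)) ^ 2
        + ((e γ k 1) ^ 2 + (e γ k 2) ^ 2) * (Real.sin (k 0 * y)) ^ 2 ≤ 3 := by
      nlinarith [sq_nonneg (Real.cos (k 0 * y)), sq_nonneg (Real.sin (k 0 * y)),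
        sq_nonneg (e γ k 0), sq_nonneg (e γ k 1), sq_nonneg (e γ k 2)]
    have h4M : 4 * (χ k) ^ 2 / (2 * π ^ 2 * ‖k‖) = 4 * M k := by
      rw [hMdef]; simp only; rw [mul_div_assoc]
    simp only [hFdef]
    rw [h4M, abs_mul, abs_of_nonneg (by nlinarith [hMnn k] : (0:ℝ) ≤ 4 * M k)]
    calc 4 * M k * |(e γ k 0) ^ 2 * (Real.cos (k 0 * y)) ^ 2
          + ((e γ k 1) ^ 2 + (e γ k 2) ^ 2) * (Real.sin (k 0 * y)) ^ 2|
        ≤ 4 * M k * 3 := by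
          apply mul_le_mul_of_nonneg_left _ (by nlinarith [hMnn k])
          rw [abs_of_nonneg hBnn]
          exact hB3
      _ = 12 * M k := by ring
  have hGint : Integrable G := by
    have hmG : Measurable G := by
      rw [hGdef]
      exact hmM.mul ((((measurable_const.sub (((mcoord 0).div hmnorm).pow_const 2)).add
        (((mcoord 1).div hmnorm).pow_const 2)).add (((mcoord 2).div hmnorm).pow_const 2)).mul
        (Real.continuous_cos.measurable.comp (((mcoord 0).const_mul 2).mul_const y)))
    apply hint G 4 (by norm_num) hmG.aestronglyMeasurable
    intro k h0 h1
    have hkne : k ≠ 0 := by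
      intro h
      rw [h] at h0
      simp at h0
    have hh := hhat k hkne
    have hq0 := sq_nonneg (k 0 / ‖k‖)
    have hq1 := sq_nonneg (k 1 / ‖k‖)
    have hq2 := sq_nonneg (k 2 / ‖k‖)
    have hA : |(-1 - (k 0 / ‖k‖) ^ 2 + (k 1 / ‖k‖) ^ 2 + (k 2 / ‖k‖) ^ 2)| ≤ 4 := by
      rw [abs_le]
      constructor <;> nlinarith
    simp only [hGdef]
    rw [abs_mul, abs_mul, abs_of_nonneg (hMnn k)]
    calc M k * (|(-1 - (k 0 / ‖k‖) ^ 2 + (k 1 / ‖k‖) ^ 2 + (k 2 / ‖k‖) ^ 2)|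
          * |Real.cos (2 * k 0 * y)|)
        ≤ M k * (4 * 1) := by
          apply mul_le_mul_of_nonneg_left _ (hMnn k)
          exact mul_le_mul hA (Real.abs_cos_le_one _) (abs_nonneg _) (by norm_num)
      _ = 4 * M k := by ring
  -- evenness
  have hMeven : ∀ k, M (negFirst k) = M k := by
    intro k
    simp only [hMdef]
    rw [negFirst.norm_map, hχrad (negFirst k) k (negFirst.norm_map k)]
  have hGeven : ∀ k, G (negFirst k) = G k := by
    intro k
    simp only [hGdef]
    rw [hMeven, negFirst.norm_map, negFirst_apply_zero, negFirst_apply_one, negFirst_apply_two]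
    rw [show 2 * -k 0 * y = -(2 * k 0 * y) by ring, Real.cos_neg, neg_div, neg_sq]
  -- second sum: ∫ N γ = ∫ M
  have hN0 : ∫ k, M k * ‖e 0 k‖ ^ 2 = ∫ k, M k := by
    apply integral_congr_ae
    filter_upwards [haene] with k hk
    rw [(honb k hk).1]; ring
  have hN1 : ∫ k, M k * ‖e 1 k‖ ^ 2 = ∫ k, M k := by
    apply integral_congr_ae
    filter_upwards [haene] with k hk
    rw [(honb k hk).2.1]; ring
  -- RHS integrand = G
  have hRHS : ∀ k : EuclideanSpace ℝ (Fin 3),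
      (1 / (2 * π ^ 2)) * ((χ k) ^ 2 / ‖k‖) *
        (-1 - (k 0 / ‖k‖) ^ 2 + (k 1 / ‖k‖) ^ 2 + (k 2 / ‖k‖) ^ 2) *
        Real.cos (2 * k 0 * y) = G k := by
    intro k
    simp only [hGdef, hMdef]
    rw [div_mul_div_comm, one_mul]
    ring
  -- halving
  have hMhalf : ∫ k, M k = 2 * ∫ k in S, M k := aux_half M hMint hMeven
  have hGhalf : ∫ k, G k = 2 * ∫ k in S, G k := aux_half G hGint hGeven
  -- pointwise identity on S
  have hpt : ∀ k ∈ S, F 0 k + F 1 k = 2 * G k + 4 * M k := by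
    intro k hk
    have hk0 : 0 < k 0 := hk
    have hkne : k ≠ 0 := by
      intro h
      rw [h] at hk0
      simp at hk0
    have h0 := hesum k hkne 0
    have h1 := hesum k hkne 1
    have h2 := hesum k hkne 2
    have hs1 := hhat k hkne
    simp only [hFdef, hGdef, hMdef]
    rw [show 2 * k 0 * y = 2 * (k 0 * y) by ring, Real.cos_two_mul, Real.sin_sq]
    linear_combination
      (4 * (χ k) ^ 2 / (2 * π ^ 2 * ‖k‖) * (Real.cos (k 0 * y)) ^ 2) * h0
      + (4 * (χ k) ^ 2 / (2 * π ^ 2 * ‖k‖) * (1 - (Real.cos (k 0 * y)) ^ 2)) * h1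
      + (4 * (χ k) ^ 2 / (2 * π ^ 2 * ‖k‖) * (1 - (Real.cos (k 0 * y)) ^ 2)) * h2
      - (2 * (χ k) ^ 2 / (2 * π ^ 2 * ‖k‖)) * hs1
  -- assembling
  rw [Fin.sum_univ_two, Fin.sum_univ_two]
  rw [hN0, hN1, hMhalf]
  simp only [hRHS]
  rw [hGhalf]
  have hsplit : (∫ k in S, F 0 k) + ∫ k in S, F 1 k = ∫ k in S, (F 0 k + F 1 k) :=
    (integral_add ((hFint 0).integrableOn) ((hFint 1).integrableOn)).symm
  rw [hsplit, setIntegral_congr_fun hSm hpt]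
  rw [integral_add ((hGint.integrableOn).const_mul 2) ((hMint.integrableOn).const_mul 4)]
  rw [integral_const_mul, integral_const_mul]
  ring
end
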